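/- Let V : ℝ → ℝ, let α < β be real numbers, and let x_α < x_β. Suppose ψ_α, ψ_β : ℝ → ℝ solve the Schrödinger equation with potential V and eigenvalues α and β respectively on [x_α, x_β], with continuous first derivatives there. Assume ψ_α(x_α) = 0, ψ_α'(x_α) > 0, ψ_β(x_α) > 0, and ψ_α(x) > 0 and ψ_β(x) > 0 for all x ∈ (x_α, x_β). Then the ratio x ↦ ψ_α(x)/ψ_β(x) is strictly increasing on (x_α, x_β); that is, for all x < y in (x_α, x_β) one has ψ_α(x)/ψ_β(x) < ψ_α(y)/ψ_β(y). -/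

import Mathlib

/-- Monotonicity of the ratio of gap-edge eigenfunctions: with `ψα, ψβ` solving the
Schrödinger equation at energies `α < β` on `[x_α, x_β]`, `ψα(x_α) = 0`, `ψα'(x_α) > 0`,
`ψβ(x_α) > 0` and both positive inside, the ratio `ψα/ψβ` is strictly increasing on
`(x_α, x_β)`. -/
theorem ratio_strictly_increasing
    (V : ℝ → ℝ) (α β : ℝ) (hαβ : α < β) (xα xβ : ℝ) (hx : xα < xβ)
    (ψα ψα' ψα'' ψβ ψβ' ψβ'' : ℝ → ℝ)
    (hψα1 : ∀ x ∈ Set.Icc xα xβ, HasDerivAt ψα (ψα' x) x)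
    (hψα2 : ∀ x ∈ Set.Icc xα xβ, HasDerivAt ψα' (ψα'' x) x)
    (hψαc : ContinuousOn ψα' (Set.Icc xα xβ))
    (hψβ1 : ∀ x ∈ Set.Icc xα xβ, HasDerivAt ψβ (ψβ' x) x)
    (hψβ2 : ∀ x ∈ Set.Icc xα xβ, HasDerivAt ψβ' (ψβ'' x) x)
    (hψβc : ContinuousOn ψβ' (Set.Icc xα xβ))
    (heqα : ∀ x ∈ Set.Icc xα xβ, -ψα'' x + V x * ψα x = α * ψα x)
    (heqβ : ∀ x ∈ Set.Icc xα xβ, -ψβ'' x + V x * ψβ x = β * ψβ x)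
    (hzα : ψα xα = 0) (hdα : 0 < ψα' xα) (hβ0 : 0 < ψβ xα)
    (hposα : ∀ x ∈ Set.Ioo xα xβ, 0 < ψα x)
    (hposβ : ∀ x ∈ Set.Ioo xα xβ, 0 < ψβ x) :
    ∀ x ∈ Set.Ioo xα xβ, ∀ y ∈ Set.Ioo xα xβ, x < y →
      ψα x / ψβ x < ψα y / ψβ y := by
  set W : ℝ → ℝ := fun t => ψβ t * ψα' t - ψα t * ψβ' t with hWdef
  -- W has derivative (β-α) ψα ψβ on Icc
  have hW : ∀ t ∈ Set.Icc xα xβ, HasDerivAt W ((β - α) * (ψα t * ψβ t)) t := by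
    intro t ht
    have h1 := ((hψβ1 t ht).mul (hψα2 t ht)).sub ((hψα1 t ht).mul (hψβ2 t ht))
    refine HasDerivAt.congr_deriv h1 (Eq.symm ?_)
    have e1 := heqα t ht
    have e2 := heqβ t ht
    linear_combination (ψβ t) * e1 - (ψα t) * e2
  -- W is continuous on Icc
  have hψαcont : ContinuousOn ψα (Set.Icc xα xβ) := fun t ht =>
    (hψα1 t ht).continuousAt.continuousWithinAt
  have hψβcont : ContinuousOn ψβ (Set.Icc xα xβ) := fun t ht =>
    (hψβ1 t ht).continuousAt.continuousWithinAt
  have hWcont : ContinuousOn W (Set.Icc xα xβ) :=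
    (hψβcont.mul hψαc).sub (hψαcont.mul hψβc)
  -- W is positive on Ioo
  have hWpos : ∀ t ∈ Set.Ioo xα xβ, 0 < W t := by
    intro t ht
    have hsub : Set.Icc xα t ⊆ Set.Icc xα xβ := Set.Icc_subset_Icc le_rfl ht.2.le
    have hmono : MonotoneOn W (Set.Icc xα t) := by
      apply monotoneOn_of_deriv_nonneg (convex_Icc xα t) (hWcont.mono hsub)
      · intro s hs
        rw [interior_Icc] at hs
        have hs' : s ∈ Set.Icc xα xβ := hsub (Set.Ioo_subset_Icc_self hs)
        exact (hW s hs').differentiableAt.differentiableWithinAt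
      · intro s hs
        rw [interior_Icc] at hs
        have hs2 : s ∈ Set.Ioo xα xβ := ⟨hs.1, lt_of_lt_of_le hs.2 ht.2.le⟩
        rw [(hW s (Set.Ioo_subset_Icc_self hs2)).deriv]
        have h1 := hposα s hs2
        have h2 := hposβ s hs2
        have h3 : 0 < β - α := by linarith
        positivity
    have h0 : W xα ≤ W t := hmono (Set.left_mem_Icc.2 ht.1.le)
      (Set.right_mem_Icc.2 ht.1.le) ht.1.le
    have : 0 < W xα := by
      simp only [hWdef, hzα]
      nlinarith
    linarith
  -- the ratio is strictly monotone on Ioo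
  have hne : ∀ t ∈ Set.Ioo xα xβ, ψβ t ≠ 0 := fun t ht => (hposβ t ht).ne'
  have hstrict : StrictMonoOn (fun t => ψα t / ψβ t) (Set.Ioo xα xβ) := by
    apply strictMonoOn_of_deriv_pos (convex_Ioo xα xβ)
    · exact (hψαcont.mono Set.Ioo_subset_Icc_self).div
        (hψβcont.mono Set.Ioo_subset_Icc_self) hne
    · intro t ht
      rw [interior_Ioo] at ht
      have ht' : t ∈ Set.Icc xα xβ := Set.Ioo_subset_Icc_self ht
      have hd := (hψα1 t ht').div (hψβ1 t ht') (hne t ht)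
      rw [show (fun t => ψα t / ψβ t) = ψα / ψβ from rfl, hd.deriv]
      have hW' := hWpos t ht
      have hb := hposβ t ht
      apply div_pos
      · simp only [hWdef] at hW'; nlinarith
      · positivity
  exact fun x hx' y hy' hxy => hstrict hx' hy' hxy
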